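/- Let Ā ∈ so(n) have spectrum contained in the open interval i(-π, π), and let ρ be an orthogonal involution with ρ exp(Ā) ρ = exp(Ā)⁻¹ (equivalently ρ exp(Ā) = exp(-Ā) ρ). Then ρ Ā ρ = -Ā, and consequently exp(-Ā τ) ρ = ρ exp(Ā τ) for all τ ∈ ℝ. -/

import Mathlib

open Matrix Polynomial

noncomputable section SkewLogAux

private def conjAlgHom {R A : Type*} [CommSemiring R] [Ring A] [Algebra R A] (u : Aˣ) :
    A →ₐ[R] A where
  toFun x := ↑u * x * ↑u⁻¹
  map_one' := by simp
  map_mul' x y := by simp [mul_assoc]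
  map_zero' := by simp
  map_add' x y := by simp [mul_add, add_mul]
  commutes' r := by
    show (↑u : A) * algebraMap R A r * ↑u⁻¹ = algebraMap R A r
    rw [show (↑u : A) * algebraMap R A r = algebraMap R A r * ↑u from (Algebra.commutes r _).symm,
      mul_assoc, Units.mul_inv, mul_one]

private lemma aeval_units_conj {R A : Type*} [CommSemiring R] [Ring A] [Algebra R A] (u : Aˣ)
    (x : A) (p : R[X]) :
    aeval ((↑u : A) * x * ↑u⁻¹) p = ↑u * aeval x p * ↑u⁻¹ :=
  aeval_algHom_apply (conjAlgHom (R := R) u) x p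

private lemma aeval_diagonal {N : ℕ} {R : Type*} [CommSemiring R] (d : Fin N → R) (p : R[X]) :
    aeval (Matrix.diagonal d) p = Matrix.diagonal (fun i => p.eval (d i)) := by
  have h1 := aeval_algHom_apply (Matrix.diagonalAlgHom (n := Fin N) (α := R) R) d p
  simp only [Matrix.diagonalAlgHom_apply] at h1
  have h3 : (aeval d p : Fin N → R) = fun i => p.eval (d i) := by
    funext i
    have h2 := aeval_algHom_apply (Pi.evalAlgHom R (fun _ : Fin N => R) i) d p
    exact h2.symm.trans (congrFun (coe_aeval_eq_eval (d i)) p)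
  rw [h1, h3]

end SkewLogAux

section Core

private lemma skew_decomp {N : ℕ} (M : Matrix (Fin N) (Fin N) ℂ) (hM : Mᴴ = -M) :
    ∃ (u : (Matrix (Fin N) (Fin N) ℂ)ˣ) (d : Fin N → ℂ),
      (∀ j, d j ∈ spectrum ℂ M) ∧
      M = (u : Matrix (Fin N) (Fin N) ℂ) * Matrix.diagonal d * (↑u⁻¹ : Matrix (Fin N) (Fin N) ℂ) ∧
      NormedSpace.exp M = (u : Matrix (Fin N) (Fin N) ℂ) *
        Matrix.diagonal (fun j => Complex.exp (d j)) * (↑u⁻¹ : Matrix (Fin N) (Fin N) ℂ) := by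
  have hH : (Complex.I • M).IsHermitian := by
    show (Complex.I • M)ᴴ = Complex.I • M
    rw [conjTranspose_smul, hM]
    simp [Complex.star_def, Complex.conj_I]
  set U := hH.eigenvectorUnitary with hU
  set u : (Matrix (Fin N) (Fin N) ℂ)ˣ := ⟨(U : Matrix (Fin N) (Fin N) ℂ),
    star (U : Matrix (Fin N) (Fin N) ℂ),
    (Matrix.mem_unitaryGroup_iff).mp U.2, (Matrix.mem_unitaryGroup_iff').mp U.2⟩ with hu
  set d : Fin N → ℂ := fun j => -Complex.I * (hH.eigenvalues j : ℂ) with hd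
  have hMeq : M = (u : Matrix (Fin N) (Fin N) ℂ) * Matrix.diagonal d *
      (↑u⁻¹ : Matrix (Fin N) (Fin N) ℂ) := by
    have h4 : M = (-Complex.I) • ((U : Matrix (Fin N) (Fin N) ℂ) *
        Matrix.diagonal (RCLike.ofReal ∘ hH.eigenvalues) * star (U : Matrix (Fin N) (Fin N) ℂ)) := by
      rw [← Unitary.conjStarAlgAut_apply (S := ℂ), hU, ← hH.spectral_theorem, smul_smul, neg_mul, Complex.I_mul_I, neg_neg, one_smul]
    refine h4.trans ?_
    have h5 : (-Complex.I) • Matrix.diagonal (RCLike.ofReal ∘ hH.eigenvalues) =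
        Matrix.diagonal d := by
      ext i j
      by_cases hij : i = j <;> simp [Matrix.diagonal, hij, hd]
    show _ = (U : Matrix (Fin N) (Fin N) ℂ) * _ * star (U : Matrix (Fin N) (Fin N) ℂ)
    rw [← h5, Matrix.mul_smul, Matrix.smul_mul]
  have hspec : ∀ j, d j ∈ spectrum ℂ M := by
    have h6 : spectrum ℂ M = Set.range d := by
      conv_lhs => rw [hMeq]
      rw [spectrum.units_conjugate, spectrum_diagonal]
    intro j
    rw [h6]
    exact ⟨j, rfl⟩
  have hexp : NormedSpace.exp M = (u : Matrix (Fin N) (Fin N) ℂ) *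
      Matrix.diagonal (fun j => Complex.exp (d j)) * (↑u⁻¹ : Matrix (Fin N) (Fin N) ℂ) := by
    conv_lhs => rw [hMeq]
    rw [Matrix.exp_units_conj, Matrix.exp_diagonal]
    congr 2
    funext j
    simp [Pi.exp_def, ← Complex.exp_eq_exp_ℂ]
  exact ⟨u, d, hspec, hMeq, hexp⟩

private lemma exp_injective_skew {N : ℕ} (M M' : Matrix (Fin N) (Fin N) ℂ)
    (hM : Mᴴ = -M) (hM' : M'ᴴ = -M')
    (hs : ∀ μ ∈ spectrum ℂ M, |μ.im| < Real.pi)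
    (hs' : ∀ μ ∈ spectrum ℂ M', |μ.im| < Real.pi)
    (h : NormedSpace.exp M = NormedSpace.exp M') : M = M' := by
  obtain ⟨u, d, hspecd, hMeq, hMexp⟩ := skew_decomp M hM
  obtain ⟨v, e, hspece, hM'eq, hM'exp⟩ := skew_decomp M' hM'
  set s : Finset ℂ := (Finset.univ.image fun j => Complex.exp (d j)) ∪
      (Finset.univ.image fun j => Complex.exp (e j)) with hs_def
  set p : Polynomial ℂ := Lagrange.interpolate s id Complex.log with hp
  have hinj : Set.InjOn (id : ℂ → ℂ) ↑s := Function.injective_id.injOn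
  have keyval : ∀ z : ℂ, Complex.exp z ∈ s → -Real.pi < z.im → z.im ≤ Real.pi →
      p.eval (Complex.exp z) = z := by
    intro z hz h1 h2
    have := Lagrange.eval_interpolate_at_node Complex.log hinj hz
    simp only [id] at this
    rw [hp, this, Complex.log_exp h1 h2]
  have key : ∀ (w : Fin N → ℂ) (u' : (Matrix (Fin N) (Fin N) ℂ)ˣ),
      (∀ j, Complex.exp (w j) ∈ s ∧ -Real.pi < (w j).im ∧ (w j).im ≤ Real.pi) →
      aeval ((u' : Matrix (Fin N) (Fin N) ℂ) * Matrix.diagonal (fun j => Complex.exp (w j)) *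
        (↑u'⁻¹ : Matrix (Fin N) (Fin N) ℂ)) p =
      (u' : Matrix (Fin N) (Fin N) ℂ) * Matrix.diagonal w *
        (↑u'⁻¹ : Matrix (Fin N) (Fin N) ℂ) := by
    intro w u' hw
    have hfw : (fun i => p.eval (Complex.exp (w i))) = w :=
      funext fun j => keyval (w j) (hw j).1 (hw j).2.1 (hw j).2.2
    rw [aeval_units_conj, aeval_diagonal, hfw]
  have hdmem : ∀ j, Complex.exp (d j) ∈ s ∧ -Real.pi < (d j).im ∧ (d j).im ≤ Real.pi := by
    intro j
    have h1 := hs _ (hspecd j)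
    rw [abs_lt] at h1
    exact ⟨Finset.mem_union_left _ (Finset.mem_image_of_mem _ (Finset.mem_univ j)),
      h1.1, le_of_lt h1.2⟩
  have hemem : ∀ j, Complex.exp (e j) ∈ s ∧ -Real.pi < (e j).im ∧ (e j).im ≤ Real.pi := by
    intro j
    have h1 := hs' _ (hspece j)
    rw [abs_lt] at h1
    exact ⟨Finset.mem_union_right _ (Finset.mem_image_of_mem _ (Finset.mem_univ j)),
      h1.1, le_of_lt h1.2⟩
  have hfinal : aeval (NormedSpace.exp M) p = aeval (NormedSpace.exp M') p := by rw [h]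
  rw [hMexp, hM'exp, key d u hdmem, key e v hemem, ← hMeq, ← hM'eq] at hfinal
  exact hfinal

end Core

/-- If `Ā ∈ so(n)` has spectrum in `i(-π,π)` and `ρ exp(Ā) ρ = exp(Ā)⁻¹` for an
orthogonal involution `ρ`, then `ρ Ā ρ = -Ā` and `exp(-Āτ) ρ = ρ exp(Āτ)`. -/
theorem skew_log_anticommutes
    (n : ℕ) (Abar : Matrix (Fin n) (Fin n) ℝ)
    (hskew : Abarᵀ = -Abar)
    (hspec : ∀ μ ∈ spectrum ℂ (Abar.map (Complex.ofReal)),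
      μ.re = 0 ∧ |μ.im| < Real.pi)
    (ρ : Matrix (Fin n) (Fin n) ℝ)
    (hρorth : ρᵀ * ρ = 1) (hρinv : ρ * ρ = 1)
    (hconj : ρ * NormedSpace.exp Abar * ρ = (NormedSpace.exp Abar)⁻¹) :
    ρ * Abar * ρ = -Abar ∧
      ∀ τ : ℝ, NormedSpace.exp (-(τ • Abar)) * ρ = ρ * NormedSpace.exp (τ • Abar) := by
  have hρsym : ρᵀ = ρ := by
    calc ρᵀ = ρᵀ * (ρ * ρ) := by rw [hρinv, mul_one]
    _ = (ρᵀ * ρ) * ρ := by rw [mul_assoc]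
    _ = ρ := by rw [hρorth, one_mul]
  have hρunit : IsUnit ρ := ⟨⟨ρ, ρ, hρinv, hρinv⟩, rfl⟩
  have hρ_inv : ρ⁻¹ = ρ := Matrix.inv_eq_right_inv hρinv
  have hexpconjρ : ∀ X : Matrix (Fin n) (Fin n) ℝ,
      NormedSpace.exp (ρ * X * ρ) = ρ * NormedSpace.exp X * ρ := by
    intro X
    have h0 := Matrix.exp_conj ρ X hρunit
    rwa [hρ_inv] at h0
  -- real exponential equation
  have hexpℝ : NormedSpace.exp (ρ * Abar * ρ) = NormedSpace.exp (-Abar) := by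
    rw [hexpconjρ, hconj, Matrix.exp_neg]
  -- complexify
  set F : Matrix (Fin n) (Fin n) ℝ →+* Matrix (Fin n) (Fin n) ℂ :=
    (algebraMap ℝ ℂ).mapMatrix with hF
  have hFexp : ∀ X : Matrix (Fin n) (Fin n) ℝ,
      F (NormedSpace.exp X) = NormedSpace.exp (F X) := by
    intro X
    letI : SeminormedRing (Matrix (Fin n) (Fin n) ℝ) := Matrix.linftyOpSemiNormedRing
    letI : NormedRing (Matrix (Fin n) (Fin n) ℝ) := Matrix.linftyOpNormedRing
    letI : NormedAlgebra ℝ (Matrix (Fin n) (Fin n) ℝ) := Matrix.linftyOpNormedAlgebra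
    letI : SeminormedRing (Matrix (Fin n) (Fin n) ℂ) := Matrix.linftyOpSemiNormedRing
    letI : NormedRing (Matrix (Fin n) (Fin n) ℂ) := Matrix.linftyOpNormedRing
    letI : NormedAlgebra ℝ (Matrix (Fin n) (Fin n) ℂ) := Matrix.linftyOpNormedAlgebra
    letI : NormedAlgebra ℂ (Matrix (Fin n) (Fin n) ℂ) := Matrix.linftyOpNormedAlgebra
    letI : NormedAlgebra ℚ (Matrix (Fin n) (Fin n) ℝ) := Matrix.linftyOpNormedAlgebra
    letI : NormedAlgebra ℚ (Matrix (Fin n) (Fin n) ℂ) := Matrix.linftyOpNormedAlgebra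
    have hcont : Continuous F := by
      simp only [hF]
      exact Continuous.matrix_map continuous_id (continuous_algebraMap ℝ ℂ)
    have h1 := NormedSpace.map_exp F hcont X
    exact h1
  have hFapp : ∀ X : Matrix (Fin n) (Fin n) ℝ, F X = X.map Complex.ofReal := by
    intro X; rfl
  set C : Matrix (Fin n) (Fin n) ℂ := Abar.map Complex.ofReal with hC
  set P : Matrix (Fin n) (Fin n) ℂ := ρ.map Complex.ofReal with hP
  have hPP : P * P = 1 := by
    rw [hP, ← hFapp, ← map_mul F, hρinv, _root_.map_one F]
  set uP : (Matrix (Fin n) (Fin n) ℂ)ˣ := ⟨P, P, hPP, hPP⟩ with huP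
  have hCT : ∀ X : Matrix (Fin n) (Fin n) ℝ, (X.map Complex.ofReal)ᴴ = Xᵀ.map Complex.ofReal := by
    intro X
    ext i j
    simp [Matrix.conjTranspose_apply, Complex.conj_ofReal]
  have hskew1 : (ρ * Abar * ρ)ᵀ = -(ρ * Abar * ρ) := by
    rw [Matrix.transpose_mul, Matrix.transpose_mul, hρsym, hskew]
    simp [Matrix.mul_assoc]
  -- the two complex skew matrices
  have hM : ((ρ * Abar * ρ).map Complex.ofReal)ᴴ = -((ρ * Abar * ρ).map Complex.ofReal) := by
    rw [hCT, hskew1, ← hFapp, ← hFapp, map_neg F]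
  have hCskew : Cᴴ = -C := by
    rw [hC, hCT, hskew, ← hFapp, map_neg F, hFapp]
  have hnegmap : (-Abar).map Complex.ofReal = -C := by
    rw [hC, ← hFapp, map_neg F, hFapp]
  have hM' : ((-Abar).map Complex.ofReal)ᴴ = -((-Abar).map Complex.ofReal) := by
    rw [hnegmap, Matrix.conjTranspose_neg, hCskew, neg_neg]
  have hunits : (ρ * Abar * ρ).map Complex.ofReal =
      (uP : Matrix (Fin n) (Fin n) ℂ) * C * (↑uP⁻¹ : Matrix (Fin n) (Fin n) ℂ) := by
    rw [← hFapp, map_mul F, map_mul F]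
    rfl
  have hsM : ∀ μ ∈ spectrum ℂ ((ρ * Abar * ρ).map Complex.ofReal), |μ.im| < Real.pi := by
    intro μ hμ
    rw [hunits, spectrum.units_conjugate] at hμ
    exact (hspec μ hμ).2
  have hsM' : ∀ μ ∈ spectrum ℂ ((-Abar).map Complex.ofReal), |μ.im| < Real.pi := by
    intro μ hμ
    rw [hnegmap, ← spectrum.neg_eq, Set.mem_neg] at hμ
    simpa using (hspec _ hμ).2
  have hexpℂ : NormedSpace.exp ((ρ * Abar * ρ).map Complex.ofReal) =
      NormedSpace.exp ((-Abar).map Complex.ofReal) := by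
    rw [← hFapp, ← hFapp, ← hFexp, ← hFexp, hexpℝ]
  have hmain : ρ * Abar * ρ = -Abar := by
    have h2 := exp_injective_skew _ _ hM hM' hsM hsM' hexpℂ
    rw [← hFapp, ← hFapp] at h2
    exact Matrix.map_injective Complex.ofReal_injective h2
  refine ⟨hmain, fun τ => ?_⟩
  have h3 : ρ * (τ • Abar) * ρ = -(τ • Abar) := by
    rw [Matrix.mul_smul, Matrix.smul_mul, hmain, smul_neg]
  calc NormedSpace.exp (-(τ • Abar)) * ρ
      = NormedSpace.exp (ρ * (τ • Abar) * ρ) * ρ := by rw [h3]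
    _ = ρ * NormedSpace.exp (τ • Abar) * (ρ * ρ) := by
        rw [hexpconjρ, Matrix.mul_assoc, Matrix.mul_assoc]
    _ = ρ * NormedSpace.exp (τ • Abar) := by rw [hρinv, mul_one]
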